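/- Let d ≥ 2, μ ≥ 0, λ > 0, and let v be the Uvarov modification ⟨v,p⟩ = ⟨u_μ,p⟩ + λ p(0) of the ball moment functional. Then lim_{n→∞} K_n(v; 0, 0) = 1/λ. -/

import Mathlib

open MvPolynomial Matrix

/-- The index set for monomials of total degree `n` in `d` variables:
multi-indices (exponent tuples) summing to `n`. Its cardinality is `r_n^d = C(n+d-1,n)`. -/
abbrev Idx (d n : ℕ) : Type := {ν : Fin d → ℕ // ν ∈ Finset.Nat.antidiagonalTuple d n}

/-- The monomial `x^ν` associated with a multi-index `ν` of total degree `n`;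
the family `fun α : Idx d n => monIdx α` is the canonical vector `𝕏_n`. -/
noncomputable def monIdx {d n : ℕ} (α : Idx d n) : MvPolynomial (Fin d) ℝ :=
  MvPolynomial.monomial (Finsupp.equivFunOnFinite.symm α.1) 1

/-- A polynomial system (PS): a sequence of vectors `ℙ_n` of size `r_n^d` whose
entries are polynomials of total degree `n`, the entries of `ℙ_0,…,ℙ_n` forming a
basis of the polynomials of total degree at most `n`. -/
structure PolySystem (d : ℕ) where
  vec : (n : ℕ) → Idx d n → MvPolynomial (Fin d) ℝ
  degree_eq : ∀ n α, (vec n α).totalDegree = n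
  indep : LinearIndependent ℝ (fun p : (Σ n : ℕ, Idx d n) => vec p.1 p.2)
  spans : ∀ (n : ℕ) (p : MvPolynomial (Fin d) ℝ), p.totalDegree ≤ n →
    p ∈ Submodule.span ℝ {q | ∃ m ≤ n, ∃ α : Idx d m, q = vec m α}

/-- `{ℙ_n}` is an orthogonal polynomial system (OPS) with respect to the moment
functional `u` : `⟨u, 𝕏_m ℙ_n^t⟩ = 0` for `m < n` and `⟨u, 𝕏_n ℙ_n^t⟩` nonsingular. -/
def IsOPS {d : ℕ} (u : MvPolynomial (Fin d) ℝ →ₗ[ℝ] ℝ) (P : PolySystem d) : Prop :=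
  (∀ m n : ℕ, m < n → ∀ (α : Idx d m) (β : Idx d n), u (monIdx α * P.vec n β) = 0) ∧
  (∀ n : ℕ, IsUnit (Matrix.of fun α β : Idx d n => u (monIdx α * P.vec n β)).det)

/-- `u` is quasi-definite iff it admits an OPS. -/
def QuasiDefinite {d : ℕ} (u : MvPolynomial (Fin d) ℝ →ₗ[ℝ] ℝ) : Prop :=
  ∃ P : PolySystem d, IsOPS u P

/-- `H_n = ⟨u, ℙ_n ℙ_n^t⟩`. -/
noncomputable def Hmat {d : ℕ} (u : MvPolynomial (Fin d) ℝ →ₗ[ℝ] ℝ) (P : PolySystem d)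
    (n : ℕ) : Matrix (Idx d n) (Idx d n) ℝ :=
  Matrix.of fun α β => u (P.vec n α * P.vec n β)

/-- `P_m(u;x,y) = ℙ_m(x)^t H_m⁻¹ ℙ_m(y)`. -/
noncomputable def kerP {d : ℕ} (u : MvPolynomial (Fin d) ℝ →ₗ[ℝ] ℝ) (P : PolySystem d)
    (m : ℕ) (x y : Fin d → ℝ) : ℝ :=
  ∑ α, ∑ β, eval x (P.vec m α) * (Hmat u P m)⁻¹ α β * eval y (P.vec m β)

/-- `kerLT u P n = K_{n-1}(u;·,·) = Σ_{m<n} P_m(u;·,·)`, so that `kerLT u P 0 = K_{-1} = 0`. -/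
noncomputable def kerLT {d : ℕ} (u : MvPolynomial (Fin d) ℝ →ₗ[ℝ] ℝ) (P : PolySystem d)
    (n : ℕ) (x y : Fin d → ℝ) : ℝ :=
  ∑ m ∈ Finset.range n, kerP u P m x y

/-- `𝖯_n(ξ) = (ℙ_n(ξ_1)|⋯|ℙ_n(ξ_N))`. -/
noncomputable def Pmat {d N : ℕ} (P : PolySystem d) (ξ : Fin N → (Fin d → ℝ)) (n : ℕ) :
    Matrix (Idx d n) (Fin N) ℝ :=
  Matrix.of fun α i => eval (ξ i) (P.vec n α)

/-- `Kmat u P ξ n = 𝒦_{n-1} = (K_{n-1}(u;ξ_i,ξ_j))_{i,j}`, with `𝒦_{-1} = 0`. -/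
noncomputable def Kmat {d N : ℕ} (u : MvPolynomial (Fin d) ℝ →ₗ[ℝ] ℝ) (P : PolySystem d)
    (ξ : Fin N → (Fin d → ℝ)) (n : ℕ) : Matrix (Fin N) (Fin N) ℝ :=
  Matrix.of fun i j => kerLT u P n (ξ i) (ξ j)

/-- `Kvec u P ξ n x = 𝖪_{n-1}(ξ,x) = (K_{n-1}(u;ξ_1,x),…,K_{n-1}(u;ξ_N,x))^t`, with `𝖪_{-1}=0`. -/
noncomputable def Kvec {d N : ℕ} (u : MvPolynomial (Fin d) ℝ →ₗ[ℝ] ℝ) (P : PolySystem d)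
    (ξ : Fin N → (Fin d → ℝ)) (n : ℕ) (x : Fin d → ℝ) : Fin N → ℝ :=
  fun i => kerLT u P n (ξ i) x

/-- A PS is monic if the degree-`n` homogeneous part of the entry of `ℙ_n` indexed
by `α` is exactly the monomial `x^α`. -/
def PolySystem.IsMonic {d : ℕ} (P : PolySystem d) : Prop :=
  ∀ (n : ℕ) (α : Idx d n) (ν : Fin d →₀ ℕ), (ν.sum fun _ e => e) = n →
    MvPolynomial.coeff ν (P.vec n α) = if ν = Finsupp.equivFunOnFinite.symm α.1 then 1 else 0

/-- Multiplication of a real matrix times a vector of polynomials. -/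
noncomputable def matVec {d : ℕ} {a b : Type} [Fintype b] (M : Matrix a b ℝ)
    (w : b → MvPolynomial (Fin d) ℝ) (i : a) : MvPolynomial (Fin d) ℝ :=
  ∑ j, M i j • w j

/-- The matrix `L_{n,i}` determined by `x_i 𝕏_n = L_{n,i} 𝕏_{n+1}`. -/
noncomputable def Lmat (d n : ℕ) (i : Fin d) : Matrix (Idx d n) (Idx d (n + 1)) ℝ :=
  Matrix.of fun α β => if β.1 = (fun j => α.1 j + if j = i then 1 else 0) then 1 else 0

/-- The unique multi-index of degree 0. -/
def zeroIdx {d : ℕ} : Idx d 0 :=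
  ⟨fun _ => 0, by simp [Finset.Nat.mem_antidiagonalTuple]⟩

/-- The degree-2 multi-index `e_i + e_j`. -/
def e2 {d : ℕ} (i j : Fin d) : Idx d 2 :=
  ⟨fun k => (if k = i then 1 else 0) + (if k = j then 1 else 0), by
    simp [Finset.Nat.mem_antidiagonalTuple, Finset.sum_add_distrib]⟩

/-- `A_{h,2} = Σ_{1≤i≤j≤d} a^{(2)}_{ij} L_{h,j} L_{h+1,i}`. -/
noncomputable def Amat2 {d : ℕ} (a2 : Idx d 2 → ℝ) (h : ℕ) :
    Matrix (Idx d h) (Idx d (h + 2)) ℝ :=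
  ∑ i : Fin d, ∑ j : Fin d,
    if i ≤ j then a2 (e2 i j) • (Lmat d h j * Lmat d (h + 1) i) else 0

/-- The polynomial `λ(x) = a_2·𝕏_2 + a_1·𝕏_1 + a_0`. -/
noncomputable def lamPoly {d : ℕ} (a2 : Idx d 2 → ℝ) (a1 : Idx d 1 → ℝ) (a0 : ℝ) :
    MvPolynomial (Fin d) ℝ :=
  (∑ α : Idx d 2, a2 α • monIdx α) + (∑ α : Idx d 1, a1 α • monIdx α) + MvPolynomial.C a0

open MeasureTheory

/-- Generalized binomial coefficient `C(a,k) = a(a-1)⋯(a-k+1)/k!` for real `a`. -/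
noncomputable def genBinom (a : ℝ) (k : ℕ) : ℝ :=
  (∏ j ∈ Finset.range k, (a - j)) / (Nat.factorial k)

/-- The Pochhammer symbol `(a)_m = a(a+1)⋯(a+m-1)`. -/
noncomputable def poch (a : ℝ) (m : ℕ) : ℝ := (ascPochhammer ℝ m).eval a

/-- The classical Jacobi polynomial `P_n^{(α,β)}` (Szegő's normalization), as a
univariate real polynomial:
`P_n^{(α,β)}(t) = Σ_{s=0}^n C(n+α, n-s) C(n+β, s) ((t-1)/2)^s ((t+1)/2)^{n-s}`. -/
noncomputable def jacobiPoly (α β : ℝ) (n : ℕ) : Polynomial ℝ :=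
  ∑ s ∈ Finset.range (n + 1),
    Polynomial.C (genBinom (n + α) (n - s) * genBinom (n + β) s * (1 / 2) ^ n) *
      (Polynomial.X - 1) ^ s * (Polynomial.X + 1) ^ (n - s)

/-- Evaluation of the Jacobi polynomial at a real point. -/
noncomputable def jacobiP (α β : ℝ) (n : ℕ) (t : ℝ) : ℝ := (jacobiPoly α β n).eval t

/-- The normalizing constant `h_{j,n}(μ)` for the orthonormal ball polynomials. -/
noncomputable def hjn (d : ℕ) (μ : ℝ) (j n : ℕ) : ℝ :=
  Real.sqrt ((poch (μ + 1 / 2) j * poch ((d : ℝ) / 2) (n - j) *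
      ((n : ℝ) - (j : ℝ) + μ + ((d : ℝ) - 1) / 2)) /
    ((Nat.factorial j : ℝ) * poch (μ + ((d : ℝ) + 1) / 2) (n - j) *
      ((n : ℝ) + μ + ((d : ℝ) - 1) / 2)))

/-- The Laplace operator on polynomials, `Δ = Σ_i ∂²/∂x_i²`. -/
noncomputable def mvLaplacian (d : ℕ) :
    MvPolynomial (Fin d) ℝ →ₗ[ℝ] MvPolynomial (Fin d) ℝ :=
  ∑ i : Fin d, ((MvPolynomial.pderiv i).toLinearMap ∘ₗ (MvPolynomial.pderiv i).toLinearMap)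

/-- `p` is a harmonic polynomial, homogeneous of degree `m`. -/
def IsHarmonicHomogeneous {d : ℕ} (p : MvPolynomial (Fin d) ℝ) (m : ℕ) : Prop :=
  p.IsHomogeneous m ∧ mvLaplacian d p = 0

/-- `σ_m = dim ℋ_m^d`, the dimension of the space of harmonic polynomials in `d`
variables homogeneous of degree `m`. -/
noncomputable def sigmaH (d m : ℕ) : ℕ :=
  Module.finrank ℝ
    ↥((MvPolynomial.homogeneousSubmodule (Fin d) ℝ m) ⊓ LinearMap.ker (mvLaplacian d))

/-- The closed unit ball in `ℝ^d`. -/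
def ballSet (d : ℕ) : Set (Fin d → ℝ) := {x | ∑ i, x i ^ 2 ≤ 1}

/-- The normalizing constant `ω_μ = Γ(μ+(d+1)/2)/(π^{d/2}Γ(μ+1/2))`. -/
noncomputable def omegaMu (d : ℕ) (μ : ℝ) : ℝ :=
  Real.Gamma (μ + ((d : ℝ) + 1) / 2) /
    (Real.pi ^ ((d : ℝ) / 2) * Real.Gamma (μ + 1 / 2))

/-- `u` is the classical ball moment functional
`⟨u_μ, p⟩ = ω_μ ∫_{𝔹^d} p(x)(1-‖x‖²)^{μ-1/2} dx`. -/
def IsBallFunctional (d : ℕ) (μ : ℝ) (u : MvPolynomial (Fin d) ℝ →ₗ[ℝ] ℝ) : Prop :=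
  ∀ p : MvPolynomial (Fin d) ℝ,
    u p = omegaMu d μ *
      ∫ x in ballSet d, (eval x p) * (1 - ∑ i, x i ^ 2) ^ (μ - 1 / 2 : ℝ)

/-- The orthonormal ball polynomial
`P^n_{j,·}(x;μ) = h_{j,n}(μ)⁻¹ P_j^{(μ-1/2,n-2j+(d-2)/2)}(2‖x‖²-1) Y(x)`,
evaluated at `x`, for a harmonic polynomial `Y` homogeneous of degree `n-2j`. -/
noncomputable def ballPval (d : ℕ) (μ : ℝ) (n j : ℕ) (Y : MvPolynomial (Fin d) ℝ)
    (x : Fin d → ℝ) : ℝ :=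
  (hjn d μ j n)⁻¹ *
    jacobiP (μ - 1 / 2) ((n : ℝ) - 2 * (j : ℝ) + ((d : ℝ) - 2) / 2) j
      (2 * (∑ i, x i ^ 2) - 1) * eval x Y


namespace UvarovAux

open MeasureTheory Filter

variable {d : ℕ} (v : MvPolynomial (Fin d) ℝ →ₗ[ℝ] ℝ) (Q : PolySystem d)

lemma degEq {d : ℕ} (ν : Fin d →₀ ℕ) : (ν.sum fun _ e => e) = ∑ i, ν i := by
  rw [Finsupp.sum_fintype]; intro; rfl

lemma expand_mul (p q : MvPolynomial (Fin d) ℝ) :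
    v (p * q) = ∑ ν ∈ p.support, coeff ν p * v (monomial ν 1 * q) := by
  conv_lhs => rw [p.as_sum, Finset.sum_mul, map_sum]
  refine Finset.sum_congr rfl fun ν _ => ?_
  have : (monomial ν (coeff ν p)) = coeff ν p • monomial ν 1 := by
    simp [smul_monomial]
  rw [this, smul_mul_assoc, _root_.map_smul, smul_eq_mul]

lemma vanish (hQ : IsOPS v Q) (N : ℕ) (β : Idx d N) (p : MvPolynomial (Fin d) ℝ)
    (hp : ∀ ν ∈ p.support, (∑ i, ν i) < N) : v (p * Q.vec N β) = 0 := by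
  rw [expand_mul]
  refine Finset.sum_eq_zero fun ν hν => ?_
  have h1 : monomial ν (1:ℝ) =
      monIdx (⟨⇑ν, by simp [Finset.Nat.mem_antidiagonalTuple]⟩ : Idx d (∑ i, ν i)) := by
    simp [monIdx, Finsupp.equivFunOnFinite_symm_coe]
  rw [h1, hQ.1 _ _ (hp ν hν), mul_zero]

lemma support_deg_le (p : MvPolynomial (Fin d) ℝ) {ν : Fin d →₀ ℕ} (h : ν ∈ p.support) :
    (∑ i, ν i) ≤ p.totalDegree := by
  have := MvPolynomial.le_totalDegree h
  rwa [Finsupp.sum_fintype] at this; intro; rfl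

lemma ortho (hQ : IsOPS v Q) {m N : ℕ} (hmn : m ≠ N) (α : Idx d m) (β : Idx d N) :
    v (Q.vec m α * Q.vec N β) = 0 := by
  rcases Nat.lt_or_ge m N with h | h
  · exact vanish v Q hQ N β _ fun ν hν =>
      lt_of_le_of_lt ((support_deg_le _ hν).trans_eq (Q.degree_eq m α)) h
  · have hNm : N < m := lt_of_le_of_ne h (Ne.symm hmn)
    rw [mul_comm]
    exact vanish v Q hQ m α _ fun ν hν =>
      lt_of_le_of_lt ((support_deg_le _ hν).trans_eq (Q.degree_eq N β)) hNm



/-- leading coefficient matrix -/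
noncomputable def Gmat (Q : PolySystem d) (n : ℕ) : Matrix (Idx d n) (Idx d n) ℝ :=
  Matrix.of fun α γ => coeff (Finsupp.equivFunOnFinite.symm γ.1) (Q.vec n α)

lemma idx_deg {n : ℕ} (γ : Idx d n) : (∑ i, (Finsupp.equivFunOnFinite.symm γ.1) i) = n := by
  have := γ.2
  rw [Finset.Nat.mem_antidiagonalTuple] at this
  simpa using this

/-- the "low part" of Q.vec n α has all support degrees < n -/
lemma lowpart_support (n : ℕ) (α : Idx d n) (ν : Fin d →₀ ℕ)
    (hν : ν ∈ (Q.vec n α - ∑ γ : Idx d n, Gmat Q n α γ • monIdx γ).support) :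
    (∑ i, ν i) < n := by
  rw [MvPolynomial.mem_support_iff] at hν
  by_contra hge
  push_neg at hge
  apply hν
  rcases Nat.lt_or_ge n (∑ i, ν i) with hgt | hle
  · -- degree > n : all coeffs vanish
    have hc : coeff ν (Q.vec n α) = 0 := by
      apply MvPolynomial.coeff_eq_zero_of_totalDegree_lt
      rw [Q.degree_eq n α]
      calc n < ∑ i, ν i := hgt
        _ = ν.sum fun _ e => e := (degEq ν).symm
        _ = ∑ i ∈ ν.support, ν i := rfl
    rw [MvPolynomial.coeff_sub, hc, zero_sub, neg_eq_zero]
    rw [MvPolynomial.coeff_sum]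
    refine Finset.sum_eq_zero fun γ _ => ?_
    rw [MvPolynomial.coeff_smul, monIdx, MvPolynomial.coeff_monomial]
    rw [if_neg, smul_zero]
    intro h
    rw [← h] at hgt
    rw [idx_deg γ] at hgt
    exact lt_irrefl _ hgt
  · -- degree = n exactly
    have hdeg : (∑ i, ν i) = n := le_antisymm hle hge
    set γ0 : Idx d n := ⟨⇑ν, by simp [Finset.Nat.mem_antidiagonalTuple, hdeg]⟩ with hγ0
    rw [MvPolynomial.coeff_sub, sub_eq_zero, MvPolynomial.coeff_sum]
    rw [Finset.sum_eq_single γ0]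
    · rw [MvPolynomial.coeff_smul, monIdx, MvPolynomial.coeff_monomial, if_pos, smul_eq_mul,
        mul_one, Gmat]
      · simp [hγ0, Finsupp.equivFunOnFinite_symm_coe]
      · simp [hγ0, Finsupp.equivFunOnFinite_symm_coe]
    · intro γ _ hne
      rw [MvPolynomial.coeff_smul, monIdx, MvPolynomial.coeff_monomial, if_neg, smul_zero]
      intro h
      apply hne
      apply Subtype.ext
      have h2 := congrArg (⇑Finsupp.equivFunOnFinite) h
      exact (by simpa [hγ0] using h2 : (γ : Fin d → ℕ) = Finsupp.equivFunOnFinite ν)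
    · intro h
      exact absurd (Finset.mem_univ γ0) h

lemma hmat_decomp (hQ : IsOPS v Q) (n : ℕ) :
    Hmat v Q n = Gmat Q n * (Matrix.of fun α β : Idx d n => v (monIdx α * Q.vec n β)) := by
  ext α β
  have key : v (Q.vec n α * Q.vec n β)
      = v ((Q.vec n α - ∑ γ : Idx d n, Gmat Q n α γ • monIdx γ) * Q.vec n β)
        + ∑ γ : Idx d n, Gmat Q n α γ * v (monIdx γ * Q.vec n β) := by
    simp only [sub_mul, map_sub, Finset.sum_mul, _root_.map_sum, smul_mul_assoc,
      _root_.map_smul, smul_eq_mul]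
    ring
  rw [Hmat, Matrix.mul_apply]
  simp only [Matrix.of_apply]
  rw [key, vanish v Q hQ n β _ (lowpart_support Q n α), zero_add]

lemma gmat_det_ne_zero (n : ℕ) : (Gmat Q n).det ≠ 0 := by
  intro hdet
  obtain ⟨c, hc0, hcg⟩ := Matrix.exists_vecMul_eq_zero_iff.2 hdet
  set p : MvPolynomial (Fin d) ℝ := ∑ α : Idx d n, c α • Q.vec n α with hp
  -- all coefficients of degree ≥ n vanish
  have hcoeff : ∀ ν : Fin d →₀ ℕ, n ≤ ∑ i, ν i → coeff ν p = 0 := by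
    intro ν hge
    rcases Nat.lt_or_ge n (∑ i, ν i) with hgt | hle
    · rw [hp, MvPolynomial.coeff_sum]
      refine Finset.sum_eq_zero fun α _ => ?_
      rw [MvPolynomial.coeff_smul]
      have : coeff ν (Q.vec n α) = 0 := by
        apply MvPolynomial.coeff_eq_zero_of_totalDegree_lt
        rw [Q.degree_eq n α]
        calc n < ∑ i, ν i := hgt
          _ = ν.sum fun _ e => e := (degEq ν).symm
          _ = ∑ i ∈ ν.support, ν i := rfl
      rw [this, smul_zero]
    · have hdeg : (∑ i, ν i) = n := le_antisymm hle hge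
      set γ0 : Idx d n := ⟨⇑ν, by simp [Finset.Nat.mem_antidiagonalTuple, hdeg]⟩ with hγ0
      have : coeff ν p = (c ᵥ* Gmat Q n) γ0 := by
        rw [hp, MvPolynomial.coeff_sum, Matrix.vecMul, dotProduct]
        refine Finset.sum_congr rfl fun α _ => ?_
        rw [MvPolynomial.coeff_smul, smul_eq_mul, Gmat]
        congr 1
        simp [hγ0, Finsupp.equivFunOnFinite_symm_coe]
      rw [this, hcg]
      rfl
  -- so p has total degree < n or p = 0 ; in all cases p lies in span of lower blocks
  have hple : p ∈ Submodule.span ℝ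
      ((fun σ : Σ m : ℕ, Idx d m => Q.vec σ.1 σ.2) '' {σ | σ.1 < n}) := by
    rcases Nat.eq_zero_or_pos n with hn0 | hn
    · have hz : p = 0 := by
        ext ν
        rw [hcoeff ν (by omega)]
        simp
      rw [hz]; exact Submodule.zero_mem _
    · have hdeg : p.totalDegree ≤ n - 1 := by
        apply Finset.sup_le
        intro ν hν
        rw [MvPolynomial.mem_support_iff] at hν
        have h2 : ¬ n ≤ ∑ i, ν i := fun h => hν (hcoeff ν h)
        rw [degEq]; omega
      refine Submodule.span_mono ?_ (Q.spans (n-1) p hdeg)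
      rintro q ⟨m, hm, α, rfl⟩
      exact ⟨⟨m, α⟩, by simp; omega, rfl⟩
  have hpub : p ∈ Submodule.span ℝ
      ((fun σ : Σ m : ℕ, Idx d m => Q.vec σ.1 σ.2) '' {σ | σ.1 = n}) := by
    rw [hp]
    refine Submodule.sum_mem _ fun α _ => Submodule.smul_mem _ _ ?_
    exact Submodule.subset_span ⟨⟨n, α⟩, rfl, rfl⟩
  have hdisj := Q.indep.disjoint_span_image
    (s := {σ : Σ m : ℕ, Idx d m | σ.1 < n}) (t := {σ | σ.1 = n})
    (by rw [Set.disjoint_left]; rintro ⟨m, α⟩ hm hn; simp at hm hn; omega)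
  have hp0 : p = 0 := by
    have := hdisj.le_bot ⟨hple, hpub⟩
    simpa using this
  -- linear independence of block n gives c = 0
  have hli : LinearIndependent ℝ (fun α : Idx d n => Q.vec n α) := by
    have : (fun α : Idx d n => Q.vec n α)
        = (fun σ : Σ m : ℕ, Idx d m => Q.vec σ.1 σ.2) ∘ (fun α => ⟨n, α⟩) := rfl
    rw [this]
    exact Q.indep.comp _ (fun a b h => by cases h; rfl)
  have := (Fintype.linearIndependent_iff.1 hli) c (by rw [← hp, hp0])
  exact hc0 (funext this)

lemma hmat_isUnit (hQ : IsOPS v Q) (n : ℕ) : IsUnit (Hmat v Q n).det := by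
  rw [hmat_decomp v Q hQ n, Matrix.det_mul]
  exact (Ne.isUnit (gmat_det_ne_zero Q n)).mul (hQ.2 n)





noncomputable def wvec (Q : PolySystem d) (m : ℕ) : Idx d m → ℝ :=
  fun α => eval 0 (Q.vec m α)

noncomputable def cvec (v : MvPolynomial (Fin d) ℝ →ₗ[ℝ] ℝ) (Q : PolySystem d) (m : ℕ) :
    Idx d m → ℝ := (Hmat v Q m)⁻¹ *ᵥ wvec Q m

noncomputable def kpoly (v : MvPolynomial (Fin d) ℝ →ₗ[ℝ] ℝ) (Q : PolySystem d) (m : ℕ) :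
    MvPolynomial (Fin d) ℝ := ∑ α, cvec v Q m α • Q.vec m α

lemma cvec_apply (m : ℕ) (α : Idx d m) :
    cvec v Q m α = ∑ β, (Hmat v Q m)⁻¹ α β * wvec Q m β := rfl

lemma v_mul_sum_smul (q : MvPolynomial (Fin d) ℝ) {ι : Type*} (s : Finset ι) (c : ι → ℝ)
    (f : ι → MvPolynomial (Fin d) ℝ) :
    v (q * ∑ i ∈ s, c i • f i) = ∑ i ∈ s, c i * v (q * f i) := by
  rw [Finset.mul_sum, map_sum]
  exact Finset.sum_congr rfl fun i _ => by
    rw [mul_smul_comm, _root_.map_smul, smul_eq_mul]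

lemma v_sum_smul_mul (q : MvPolynomial (Fin d) ℝ) {ι : Type*} (s : Finset ι) (c : ι → ℝ)
    (f : ι → MvPolynomial (Fin d) ℝ) :
    v ((∑ i ∈ s, c i • f i) * q) = ∑ i ∈ s, c i * v (f i * q) := by
  rw [Finset.sum_mul, map_sum]
  exact Finset.sum_congr rfl fun i _ => by
    rw [smul_mul_assoc, _root_.map_smul, smul_eq_mul]

lemma hmat_symm (n : ℕ) : (Hmat v Q n)ᵀ = Hmat v Q n := by
  ext α β; simp [Hmat, Matrix.transpose_apply, mul_comm]

lemma kpoly_mul_ne (hQ : IsOPS v Q) {m N : ℕ} (h : m ≠ N) (β : Idx d N) :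
    v (kpoly v Q m * Q.vec N β) = 0 := by
  rw [kpoly, v_sum_smul_mul]
  exact Finset.sum_eq_zero fun α _ => by rw [ortho v Q hQ h, mul_zero]

lemma kpoly_mul_eq (hQ : IsOPS v Q) (m : ℕ) (β : Idx d m) :
    v (kpoly v Q m * Q.vec m β) = wvec Q m β := by
  rw [kpoly, v_sum_smul_mul]
  have key : (cvec v Q m) ᵥ* (Hmat v Q m) = wvec Q m := by
    rw [cvec, ← hmat_symm v Q m, Matrix.vecMul_transpose, Matrix.mulVec_mulVec,
      hmat_symm v Q m, Matrix.mul_nonsing_inv _ (hmat_isUnit v Q hQ m), Matrix.one_mulVec]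
  calc ∑ α, cvec v Q m α * v (Q.vec m α * Q.vec m β)
      = ((cvec v Q m) ᵥ* (Hmat v Q m)) β := rfl
    _ = wvec Q m β := by rw [key]

lemma eval0_kpoly (m : ℕ) : eval 0 (kpoly v Q m) = kerP v Q m 0 0 := by
  rw [kpoly, map_sum, kerP]
  refine Finset.sum_congr rfl fun α _ => ?_
  have h1 : eval (0 : Fin d → ℝ) (cvec v Q m α • Q.vec m α)
      = cvec v Q m α * wvec Q m α := by
    rw [MvPolynomial.smul_eval]; rfl
  rw [h1, cvec_apply, Finset.sum_mul]
  refine Finset.sum_congr rfl fun β _ => ?_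
  show (Hmat v Q m)⁻¹ α β * wvec Q m β * wvec Q m α
      = eval 0 (Q.vec m α) * (Hmat v Q m)⁻¹ α β * eval 0 (Q.vec m β)
  unfold wvec
  ring

lemma kpoly_sq (hQ : IsOPS v Q) (m : ℕ) :
    v (kpoly v Q m * kpoly v Q m) = kerP v Q m 0 0 := by
  have h2 : v (kpoly v Q m * kpoly v Q m)
      = ∑ β, cvec v Q m β * v (kpoly v Q m * Q.vec m β) :=
    v_mul_sum_smul v (kpoly v Q m) Finset.univ (cvec v Q m) (Q.vec m)
  rw [h2, Finset.sum_congr rfl fun β _ => by rw [kpoly_mul_eq v Q hQ m β], kerP]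
  refine Finset.sum_congr rfl fun β _ => ?_
  rw [cvec_apply, Finset.sum_mul]
  refine Finset.sum_congr rfl fun γ _ => ?_
  show (Hmat v Q m)⁻¹ β γ * wvec Q m γ * wvec Q m β
      = eval 0 (Q.vec m β) * (Hmat v Q m)⁻¹ β γ * eval 0 (Q.vec m γ)
  unfold wvec
  ring

lemma kpoly_cross (hQ : IsOPS v Q) {m N : ℕ} (h : m ≠ N) :
    v (kpoly v Q m * kpoly v Q N) = 0 := by
  have h2 : v (kpoly v Q m * kpoly v Q N)
      = ∑ β, cvec v Q N β * v (kpoly v Q m * Q.vec N β) :=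
    v_mul_sum_smul v (kpoly v Q m) Finset.univ (cvec v Q N) (Q.vec N)
  rw [h2]
  exact Finset.sum_eq_zero fun β _ => by rw [kpoly_mul_ne v Q hQ h, mul_zero]

noncomputable def Kpoly (v : MvPolynomial (Fin d) ℝ →ₗ[ℝ] ℝ) (Q : PolySystem d) (n : ℕ) :
    MvPolynomial (Fin d) ℝ := ∑ m ∈ Finset.range (n + 1), kpoly v Q m

lemma Kpoly_mul_vec (hQ : IsOPS v Q) (n : ℕ) {m : ℕ} (hm : m ≤ n) (β : Idx d m) :
    v (Kpoly v Q n * Q.vec m β) = eval 0 (Q.vec m β) := by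
  rw [Kpoly, Finset.sum_mul, map_sum]
  rw [Finset.sum_eq_single m
    (fun m' _ hne => kpoly_mul_ne v Q hQ hne β)
    (fun h => absurd (Finset.mem_range.2 (by omega)) h)]
  exact kpoly_mul_eq v Q hQ m β

lemma Kpoly_sq (hQ : IsOPS v Q) (n : ℕ) :
    v (Kpoly v Q n * Kpoly v Q n) = kerLT v Q (n + 1) 0 0 := by
  conv_lhs => rw [show Kpoly v Q n * Kpoly v Q n
    = ∑ m ∈ Finset.range (n+1), kpoly v Q m * Kpoly v Q n from by
      rw [Kpoly, Finset.sum_mul]]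
  rw [map_sum, kerLT]
  refine Finset.sum_congr rfl fun m hm => ?_
  rw [show kpoly v Q m * Kpoly v Q n = ∑ m' ∈ Finset.range (n+1), kpoly v Q m * kpoly v Q m'
    from by rw [Kpoly, Finset.mul_sum], map_sum]
  rw [Finset.sum_eq_single m (fun m' _ hne => kpoly_cross v Q hQ (Ne.symm hne))
    (fun h => absurd hm h)]
  exact kpoly_sq v Q hQ m

lemma eval0_Kpoly (n : ℕ) : eval 0 (Kpoly v Q n) = kerLT v Q (n + 1) 0 0 := by
  rw [Kpoly, map_sum, kerLT]
  exact Finset.sum_congr rfl fun m _ => eval0_kpoly v Q m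

lemma Kpoly_reproduce (hQ : IsOPS v Q) (n : ℕ) (q : MvPolynomial (Fin d) ℝ)
    (hq : q.totalDegree ≤ n) : v (Kpoly v Q n * q) = eval 0 q := by
  have key : ∀ p, p ∈ Submodule.span ℝ {q | ∃ m ≤ n, ∃ α : Idx d m, q = Q.vec m α} →
      v (Kpoly v Q n * p) = eval 0 p := by
    intro p hp
    induction hp using Submodule.span_induction with
    | mem x hx =>
      obtain ⟨m, hm, α, rfl⟩ := hx
      exact Kpoly_mul_vec v Q hQ n hm α
    | zero => simp
    | add x y _ _ hx hy => rw [mul_add, map_add, hx, hy, map_add]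
    | smul c x _ hx =>
      rw [mul_smul_comm, _root_.map_smul, smul_eq_mul, hx, MvPolynomial.smul_eval]
  exact key q (Q.spans n q hq)


variable {d : ℕ} {μ : ℝ}

lemma sum_sq_continuous : Continuous fun x : Fin d → ℝ => ∑ i, x i ^ 2 :=
  continuous_finset_sum _ fun i _ => (continuous_apply i).pow 2

lemma ball_measurableSet : MeasurableSet (ballSet d) :=
  (isClosed_le sum_sq_continuous continuous_const).measurableSet

lemma ball_isCompact : IsCompact (ballSet d) := by
  have hclosed : IsClosed (ballSet d) := isClosed_le sum_sq_continuous continuous_const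
  have hsub : ballSet d ⊆ Metric.closedBall 0 1 := by
    intro x hx
    rw [Metric.mem_closedBall, dist_zero_right]
    rw [pi_norm_le_iff_of_nonneg (by norm_num)]
    intro i
    have h1 : x i ^ 2 ≤ 1 := by
      refine le_trans ?_ hx
      exact Finset.single_le_sum (f := fun i => x i ^ 2) (fun j _ => sq_nonneg _)
        (Finset.mem_univ i)
    rw [Real.norm_eq_abs]
    nlinarith [abs_nonneg (x i), sq_abs (x i)]
  exact (isCompact_closedBall 0 1).of_isClosed_subset hclosed hsub

lemma ball_vol_lt_top : volume (ballSet d) < ⊤ := ball_isCompact.measure_lt_top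

lemma omega_pos (hd : 1 ≤ d) (hμ : 0 ≤ μ) : 0 < omegaMu d μ := by
  apply div_pos
  · apply Real.Gamma_pos_of_pos
    have : (1:ℝ) ≤ (d:ℝ) := by exact_mod_cast hd
    linarith
  · refine mul_pos (Real.rpow_pos_of_pos Real.pi_pos _) (Real.Gamma_pos_of_pos (by linarith))

lemma u_sq_nonneg (hd : 1 ≤ d) (hμ : 0 ≤ μ) {u : MvPolynomial (Fin d) ℝ →ₗ[ℝ] ℝ}
    (hu : IsBallFunctional d μ u) (p : MvPolynomial (Fin d) ℝ) : 0 ≤ u (p * p) := by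
  rw [hu]
  apply mul_nonneg (omega_pos hd hμ).le
  apply setIntegral_nonneg ball_measurableSet
  intro x hx
  have h1 : (0:ℝ) ≤ 1 - ∑ i, x i ^ 2 := by
    have : ∑ i, x i ^ 2 ≤ 1 := hx
    linarith
  apply mul_nonneg
  · rw [_root_.map_mul]; exact mul_self_nonneg _
  · exact Real.rpow_nonneg h1 _

lemma vCS {v : MvPolynomial (Fin d) ℝ →ₗ[ℝ] ℝ}
    (hsq : ∀ p : MvPolynomial (Fin d) ℝ, 0 ≤ v (p * p))
    (p q : MvPolynomial (Fin d) ℝ) : (v (p * q)) ^ 2 ≤ v (p * p) * v (q * q) := by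
  have h : ∀ t : ℝ, 0 ≤ v (p*p) * (t*t) + (2 * v (p*q)) * t + v (q*q) := by
    intro t
    have hexp : (t • p + q) * (t • p + q)
        = (t*t) • (p*p) + t • (p*q) + t • (q*p) + q*q := by
      simp only [MvPolynomial.smul_eq_C_mul, _root_.map_mul]
      ring
    have h2 := hsq (t • p + q)
    rw [hexp, map_add, map_add, map_add, _root_.map_smul, _root_.map_smul, _root_.map_smul,
      smul_eq_mul, smul_eq_mul, smul_eq_mul, mul_comm q p] at h2
    linarith
  have hd := discrim_le_zero h
  rw [discrim] at hd
  nlinarith [hd]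

noncomputable def qt (d N : ℕ) : MvPolynomial (Fin d) ℝ := (1 - ∑ i, X i ^ 2) ^ N

lemma qt_eval (x : Fin d → ℝ) (N : ℕ) : eval x (qt d N) = (1 - ∑ i, x i ^ 2) ^ N := by
  simp [qt]

lemma qt_eval0 (N : ℕ) : eval 0 (qt d N) = 1 := by simp [qt]

lemma qt_deg (N : ℕ) : (qt d N).totalDegree ≤ 2 * N := by
  have hbase : (1 - ∑ i : Fin d, X i ^ 2 : MvPolynomial (Fin d) ℝ).totalDegree ≤ 2 := by
    refine le_trans (MvPolynomial.totalDegree_sub _ _) ?_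
    apply max_le
    · simp
    · refine le_trans (MvPolynomial.totalDegree_finset_sum _ _) ?_
      apply Finset.sup_le
      intro i _
      exact le_of_eq (MvPolynomial.totalDegree_X_pow i 2)
  calc (qt d N).totalDegree ≤ N * (1 - ∑ i : Fin d, X i ^ 2 :
        MvPolynomial (Fin d) ℝ).totalDegree := MvPolynomial.totalDegree_pow _ _
    _ ≤ N * 2 := Nat.mul_le_mul_left N hbase
    _ = 2 * N := Nat.mul_comm _ _

lemma integral_tendsto (hd : 2 ≤ d) (hμ : 0 ≤ μ) :
    Tendsto (fun N : ℕ => ∫ x in ballSet d,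
      (1 - ∑ i, x i ^ 2) ^ (2 * (N + 1)) * (1 - ∑ i, x i ^ 2) ^ (μ - 1/2 : ℝ))
      atTop (nhds 0) := by
  set F : ℕ → (Fin d → ℝ) → ℝ := fun N x =>
    (1 - ∑ i, x i ^ 2) ^ (2 * (N + 1)) * (1 - ∑ i, x i ^ 2) ^ (μ - 1/2 : ℝ) with hF
  have hmeas : Measurable fun x : Fin d → ℝ => 1 - ∑ i, x i ^ 2 :=
    (continuous_const.sub sum_sq_continuous).measurable
  have key : Tendsto (fun N : ℕ => ∫ x in ballSet d, F N x) atTop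
      (nhds (∫ x in ballSet d, (0:ℝ))) := by
    apply tendsto_integral_of_dominated_convergence (bound := fun _ => (1:ℝ))
    · intro N
      exact ((hmeas.pow_const _).mul (by measurability)).aestronglyMeasurable
    · have : IntegrableOn (fun _ : Fin d → ℝ => (1:ℝ)) (ballSet d) volume :=
        integrableOn_const ball_vol_lt_top.ne
      exact this
    · intro N
      rw [ae_restrict_iff' ball_measurableSet]
      refine Eventually.of_forall fun x hx => ?_
      have hx' : ∑ i, x i ^ 2 ≤ 1 := hx
      set t : ℝ := 1 - ∑ i, x i ^ 2 with ht
      have ht0 : 0 ≤ t := by linarith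
      have ht1 : t ≤ 1 := by
        have : 0 ≤ ∑ i, x i ^ 2 := Finset.sum_nonneg fun i _ => sq_nonneg _
        linarith
      rcases eq_or_lt_of_le ht0 with h0 | h0
      · have : F N x = 0 := by
          rw [hF]
          simp only [← ht, ← h0]
          rw [zero_pow (Nat.mul_ne_zero two_ne_zero (Nat.succ_ne_zero N)), zero_mul]
        rw [this]; norm_num
      · have : F N x = t ^ ((2 * (N + 1) : ℕ) + (μ - 1/2) : ℝ) := by
          rw [hF]
          simp only [← ht]
          rw [← Real.rpow_natCast t (2 * (N+1)), ← Real.rpow_add h0]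
        rw [this, Real.norm_eq_abs, abs_of_nonneg (Real.rpow_nonneg ht0 _)]
        apply Real.rpow_le_one ht0 ht1
        push_cast
        linarith
    · rw [ae_restrict_iff' ball_measurableSet]
      have h0 : ∀ᵐ x : (Fin d → ℝ) ∂volume, x ≠ 0 := by
        haveI : Nonempty (Fin d) := ⟨⟨0, by omega⟩⟩
        rw [ae_iff]
        have : {x : Fin d → ℝ | ¬ x ≠ 0} = {0} := by ext x; simp
        rw [this, measure_singleton]
      filter_upwards [h0] with x hx0 hxball
      have hx' : ∑ i, x i ^ 2 ≤ 1 := hxball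
      set t : ℝ := 1 - ∑ i, x i ^ 2 with ht
      have ht0 : 0 ≤ t := by linarith
      have htlt : t < 1 := by
        have hpos : 0 < ∑ i, x i ^ 2 := by
          have hex : ∃ i, x i ≠ 0 := by
            by_contra hc
            push_neg at hc
            exact hx0 (funext hc)
          obtain ⟨i, hi⟩ := hex
          exact Finset.sum_pos' (fun j _ => sq_nonneg _)
            ⟨i, Finset.mem_univ i, by positivity⟩
        linarith
      rcases eq_or_lt_of_le ht0 with h0' | h0'
      · have : ∀ N, F N x = 0 := fun N => by
          rw [hF]; simp only [← ht, ← h0']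
          rw [zero_pow (Nat.mul_ne_zero two_ne_zero (Nat.succ_ne_zero N)), zero_mul]
        simp only [this]
        exact tendsto_const_nhds
      · have hFx : ∀ N, F N x = t ^ (2 * (N + 1)) * t ^ (μ - 1/2 : ℝ) := fun N => by
          rw [hF]
        simp only [hFx]
        have h1 : Tendsto (fun N : ℕ => t ^ (2 * (N + 1))) atTop (nhds 0) := by
          have hbase : Tendsto (fun k : ℕ => t ^ k) atTop (nhds 0) :=
            tendsto_pow_atTop_nhds_zero_of_lt_one ht0 htlt
          have harg : Tendsto (fun N : ℕ => 2 * (N + 1)) atTop atTop :=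
            tendsto_atTop_mono (fun n => by simp only [id_eq]; omega) tendsto_id
          exact hbase.comp harg
        have := h1.mul_const (t ^ (μ - 1/2 : ℝ))
        rwa [zero_mul] at this
  have hzero : (∫ _x in ballSet d, (0:ℝ)) = 0 := by simp
  rw [hzero] at key
  exact key


end UvarovAux

open UvarovAux MeasureTheory Filter

/-- Theorem 5.4.  For the Uvarov modification `v = u_μ + λδ_0`
(`μ ≥ 0`, `λ > 0`), one has `lim_{n→∞} K_n(v;0,0) = 1/λ`. -/
theorem ball_uvarov_kernel_at_origin_limit
    {d : ℕ} (hd : 2 ≤ d) {μ : ℝ} (hμ : 0 ≤ μ) {lam : ℝ} (hlam : 0 < lam)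
    (u v : MvPolynomial (Fin d) ℝ →ₗ[ℝ] ℝ)
    (hu : IsBallFunctional d μ u)
    (hv : ∀ p : MvPolynomial (Fin d) ℝ, v p = u p + lam * eval 0 p)
    (Q : PolySystem d) (hQ : IsOPS v Q) :
    Filter.Tendsto (fun n : ℕ => kerLT v Q (n + 1) 0 0) Filter.atTop
      (nhds (1 / lam)) := by
  classical
  have hd1 : 1 ≤ d := by omega
  set a : ℕ → ℝ := fun n => kerLT v Q (n + 1) 0 0 with ha
  have husq : ∀ p : MvPolynomial (Fin d) ℝ, 0 ≤ u (p * p) := u_sq_nonneg hd1 hμ hu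
  have hvsq : ∀ p : MvPolynomial (Fin d) ℝ, 0 ≤ v (p * p) := by
    intro p
    rw [hv]
    have h2 : eval (0 : Fin d → ℝ) (p * p) = eval 0 p * eval 0 p := _root_.map_mul _ _ _
    rw [h2]
    nlinarith [husq p, mul_self_nonneg (eval (0 : Fin d → ℝ) p), hlam.le]
  have hKsq : ∀ n, v (Kpoly v Q n * Kpoly v Q n) = a n := fun n => Kpoly_sq v Q hQ n
  have hK0 : ∀ n, eval 0 (Kpoly v Q n) = a n := fun n => eval0_Kpoly v Q n
  have ha_nonneg : ∀ n, 0 ≤ a n := fun n => (hKsq n) ▸ hvsq _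
  have ha_eq : ∀ n, a n = u (Kpoly v Q n * Kpoly v Q n) + lam * (a n) ^ 2 := by
    intro n
    have h1 := hv (Kpoly v Q n * Kpoly v Q n)
    rw [hKsq n] at h1
    have h2 : eval (0 : Fin d → ℝ) (Kpoly v Q n * Kpoly v Q n) = (a n) ^ 2 := by
      rw [_root_.map_mul, hK0 n, sq]
    rw [h2] at h1
    exact h1
  have ha_le : ∀ n, a n ≤ 1 / lam := by
    intro n
    rcases eq_or_lt_of_le (ha_nonneg n) with h0 | h0
    · rw [← h0]; positivity
    · rw [le_div_iff₀ hlam]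
      nlinarith [ha_eq n, husq (Kpoly v Q n)]
  have ha_mono : Monotone a := by
    apply monotone_nat_of_le_succ
    intro n
    have hstep : a (n + 1) = a n + kerP v Q (n + 1) 0 0 := by
      show kerLT v Q (n + 1 + 1) 0 0 = kerLT v Q (n + 1) 0 0 + kerP v Q (n + 1) 0 0
      rw [kerLT, kerLT, Finset.sum_range_succ]
    have hker : 0 ≤ kerP v Q (n + 1) 0 0 := by
      rw [← kpoly_sq v Q hQ (n + 1)]; exact hvsq _
    rw [hstep]; linarith
  set b : ℕ → ℝ := fun N => u (qt d (N + 1) * qt d (N + 1)) with hbdef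
  have hb_nonneg : ∀ N, 0 ≤ b N := fun N => husq _
  have hb_eq : ∀ N, b N = omegaMu d μ * ∫ x in ballSet d,
      (1 - ∑ i, x i ^ 2) ^ (2 * (N + 1)) * (1 - ∑ i, x i ^ 2) ^ (μ - 1/2 : ℝ) := by
    intro N
    show u (qt d (N + 1) * qt d (N + 1)) = _
    rw [hu]
    congr 1
    have hpt : ∀ x : Fin d → ℝ, eval x (qt d (N + 1) * qt d (N + 1))
        = (1 - ∑ i, x i ^ 2) ^ (2 * (N + 1)) := by
      intro x
      rw [_root_.map_mul, qt_eval, ← pow_add]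
      congr 1
      ring
    exact integral_congr_ae (Filter.Eventually.of_forall fun x => by dsimp only; rw [hpt x])
  have hb_tendsto : Filter.Tendsto b Filter.atTop (nhds 0) := by
    have h2 := (integral_tendsto hd hμ).const_mul (omegaMu d μ)
    rw [mul_zero] at h2
    have h3 : b = fun N => omegaMu d μ * ∫ x in ballSet d,
        (1 - ∑ i, x i ^ 2) ^ (2 * (N + 1)) * (1 - ∑ i, x i ^ 2) ^ (μ - 1/2 : ℝ) :=
      funext hb_eq
    rw [h3]
    exact h2
  have hlow : ∀ N, 1 ≤ a (2 * (N + 1)) * (lam + b N) := by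
    intro N
    have hrep : v (Kpoly v Q (2 * (N + 1)) * qt d (N + 1)) = 1 := by
      rw [Kpoly_reproduce v Q hQ _ _ (qt_deg (N + 1)), qt_eval0]
    have hcs := vCS hvsq (Kpoly v Q (2 * (N + 1))) (qt d (N + 1))
    rw [hrep, hKsq] at hcs
    have hqq : v (qt d (N + 1) * qt d (N + 1)) = b N + lam := by
      rw [hv]
      have h4 : eval (0 : Fin d → ℝ) (qt d (N + 1) * qt d (N + 1)) = 1 := by
        rw [_root_.map_mul, qt_eval0, mul_one]
      rw [h4, mul_one]
    rw [hqq] at hcs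
    nlinarith [hcs]
  have hbdd : BddAbove (Set.range a) := ⟨1 / lam, by rintro _ ⟨n, rfl⟩; exact ha_le n⟩
  have hLten : Filter.Tendsto a Filter.atTop (nhds (⨆ n, a n)) :=
    tendsto_atTop_ciSup ha_mono hbdd
  have hLle : (⨆ n, a n) ≤ 1 / lam := ciSup_le ha_le
  have hLge : 1 / lam ≤ (⨆ n, a n) := by
    have hseq : Filter.Tendsto (fun N => 1 / (lam + b N)) Filter.atTop (nhds (1 / lam)) := by
      have h1 : Filter.Tendsto (fun N => lam + b N) Filter.atTop (nhds lam) := by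
        have := hb_tendsto.const_add lam
        rwa [add_zero] at this
      exact tendsto_const_nhds.div h1 (ne_of_gt hlam)
    apply le_of_tendsto hseq
    refine Filter.Eventually.of_forall fun N => ?_
    have hpos : 0 < lam + b N := by have := hb_nonneg N; linarith
    have h1 : 1 / (lam + b N) ≤ a (2 * (N + 1)) := by
      rw [div_le_iff₀ hpos]
      linarith [hlow N]
    exact h1.trans (le_ciSup hbdd _)
  have hfin : (⨆ n, a n) = 1 / lam := le_antisymm hLle hLge
  rw [← hfin]
  exact hLten
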